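/- Let K be a compact subset of 𝔻 with r := max{|z| : z ∈ K} and let μ₁ := A|_{𝔻∖K}, μ₀ := A|_𝔻 be area measures. Then the leading coefficients satisfy 1 ≤ γ_n(μ₁)/γ_n(μ₀) ≤ (1 − r^{2n+2})^{−1/2}; in particular γ_n(μ₁)/√((n+1)/π) = 1 + O(r^{2n}). -/

import Mathlib

open MeasureTheory Polynomial Filter

noncomputable section

/-- The (closed) support of a Borel measure on `ℂ`. -/
def msupp (μ : Measure ℂ) : Set ℂ := {z | ∀ U ∈ nhds z, μ U ≠ 0}

/-- `p` is the sequence of orthonormal polynomials for `μ`: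
`p n` has degree `n`, positive (real) leading coefficient, and
`⟪p m, p n⟫_μ = δ_{m n}`. -/
def ONP (μ : Measure ℂ) (p : ℕ → Polynomial ℂ) : Prop :=
  (∀ n, (p n).natDegree = n) ∧
  (∀ n, 0 < ((p n).leadingCoeff).re ∧ ((p n).leadingCoeff).im = 0) ∧
  (∀ m n, ∫ z, (p m).eval z * (starRingEnd ℂ) ((p n).eval z) ∂μ
      = if m = n then 1 else 0)

/-- The `n`-th Christoffel function of the measure `μ` at the point `z`. -/
def christoffel (μ : Measure ℂ) (n : ℕ) (z : ℂ) : ℝ :=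
  sInf {r : ℝ | ∃ P : Polynomial ℂ, P.natDegree ≤ n ∧ P.eval z = 1 ∧
      r = ∫ t, ‖P.eval t‖ ^ 2 ∂μ}

open Set

lemma theta_int (j k : ℕ) :
    ∫ θ in Set.Ioo (-Real.pi) Real.pi, Complex.exp (((j:ℂ) - k) * θ * Complex.I)
      = if j = k then ((2 * Real.pi : ℝ) : ℂ) else 0 := by
  by_cases h : j = k
  · simp only [h, sub_self, zero_mul, Complex.exp_zero, if_pos]
    rw [setIntegral_const,
      Real.volume_real_Ioo_of_le (by linarith [Real.pi_pos] : -Real.pi ≤ Real.pi)]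
    rw [Complex.real_smul, mul_one]
    push_cast
    ring
  · rw [if_neg h]
    have hc : ((j:ℂ) - k) * Complex.I ≠ 0 := by
      apply mul_ne_zero _ Complex.I_ne_zero
      rw [sub_ne_zero]
      exact_mod_cast fun hh => h (by exact_mod_cast hh)
    have hrw : ∀ θ : ℝ, ((j:ℂ) - k) * θ * Complex.I = (((j:ℂ) - k) * Complex.I) * θ := by
      intro θ; ring
    simp_rw [hrw]
    rw [← integral_Ioc_eq_integral_Ioo,
      ← intervalIntegral.integral_of_le (by linarith [Real.pi_pos]),
      integral_exp_mul_complex hc]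
    have h1 : ((j:ℂ) - k) * Complex.I * (Real.pi : ℂ) = (((j:ℤ) - (k:ℤ) : ℤ) : ℂ) * (Real.pi * Complex.I) := by
      push_cast; ring
    have h2 : ((j:ℂ) - k) * Complex.I * ((-Real.pi : ℝ) : ℂ) = ((-((j:ℤ) - (k:ℤ)) : ℤ) : ℂ) * (Real.pi * Complex.I) := by
      push_cast; ring
    rw [h1, h2, Complex.exp_int_mul, Complex.exp_int_mul, Complex.exp_pi_mul_I]
    rw [zpow_neg, ← inv_zpow, inv_neg, inv_one, sub_self, zero_div]


open MeasureTheory Polynomial Filter Set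


def Ann (a b : ℝ) : Set ℂ := {z | a < ‖z‖ ∧ ‖z‖ < b}

lemma ann_meas (a b : ℝ) : MeasurableSet (Ann a b) := by
  have : Ann a b = (fun z : ℂ => ‖z‖) ⁻¹' (Set.Ioo a b) := rfl
  rw [this]
  exact (continuous_norm.measurable) measurableSet_Ioo

lemma ann_int (a b : ℝ) (ha : 0 ≤ a) (j k : ℕ) :
    ∫ z in Ann a b, z ^ j * ((starRingEnd ℂ) z) ^ k
      = ((∫ t in Set.Ioo a b, t ^ (j + k + 1) : ℝ) : ℂ)
        * ∫ θ in Set.Ioo (-Real.pi) Real.pi, Complex.exp (((j:ℂ) - k) * θ * Complex.I) := by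
  rw [← integral_indicator (ann_meas a b), ← Complex.integral_comp_polarCoord_symm]
  have h1 : ∀ p ∈ polarCoord.target,
      p.1 • (Ann a b).indicator (fun z : ℂ => z ^ j * ((starRingEnd ℂ) z) ^ k)
          (Complex.polarCoord.symm p)
        = (Set.indicator (Set.Ioo a b) (fun t : ℝ => ((t ^ (j + k + 1) : ℝ) : ℂ)) p.1)
          * Complex.exp (((j:ℂ) - k) * p.2 * Complex.I) := by
    rintro ⟨R, θ⟩ ⟨hR, hθ⟩
    simp only [Set.mem_Ioi] at hR
    have hsymm : Complex.polarCoord.symm (R, θ) = (R : ℂ) * Complex.exp (θ * Complex.I) := by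
      rw [Complex.polarCoord_symm_apply, Complex.exp_mul_I]
      norm_num [Complex.ofReal_cos, Complex.ofReal_sin]
    have habs : ‖Complex.polarCoord.symm (R, θ)‖ = R := by
      rw [Complex.norm_polarCoord_symm, abs_of_pos hR]
    by_cases hmem : R ∈ Set.Ioo a b
    · have hz : Complex.polarCoord.symm (R, θ) ∈ Ann a b := by
        constructor <;> rw [habs]
        exacts [hmem.1, hmem.2]
      rw [Set.indicator_of_mem hz, Set.indicator_of_mem hmem, hsymm]
      have hconj : (starRingEnd ℂ) ((R : ℂ) * Complex.exp (θ * Complex.I))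
          = (R : ℂ) * Complex.exp (-(θ * Complex.I)) := by
        rw [map_mul, Complex.conj_ofReal, ← Complex.exp_conj, map_mul, Complex.conj_ofReal,
          Complex.conj_I, mul_neg]
      rw [hconj, mul_pow, mul_pow, ← Complex.exp_nat_mul, ← Complex.exp_nat_mul]
      rw [Complex.real_smul]
      rw [show ((j:ℂ) - k) * θ * Complex.I = (j:ℂ) * (θ * Complex.I) + (k:ℂ) * -(θ * Complex.I) by ring]
      rw [Complex.exp_add]
      push_cast
      ring
    · have hz : Complex.polarCoord.symm (R, θ) ∉ Ann a b := by
        intro hz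
        obtain ⟨h1, h2⟩ := hz
        rw [habs] at h1 h2
        exact hmem ⟨h1, h2⟩
      rw [Set.indicator_of_notMem hz, Set.indicator_of_notMem hmem, smul_zero, zero_mul]
  rw [setIntegral_congr_fun polarCoord.open_target.measurableSet h1]
  rw [polarCoord_target, Measure.volume_eq_prod, ← Measure.prod_restrict]
  rw [integral_prod_mul (fun t : ℝ => (Set.indicator (Set.Ioo a b) (fun t : ℝ => ((t ^ (j + k + 1) : ℝ) : ℂ)) t))
    (fun θ : ℝ => Complex.exp (((j:ℂ) - k) * θ * Complex.I))]
  rw [setIntegral_indicator measurableSet_Ioo,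
    Set.inter_eq_right.mpr (fun t ht => Set.mem_Ioi.mpr (lt_of_le_of_lt ha ht.1))]
  congr 1
  exact integral_ofReal


lemma ann_int_orth (a b : ℝ) (ha : 0 ≤ a) {j k : ℕ} (h : j ≠ k) :
    ∫ z in Ann a b, z ^ j * ((starRingEnd ℂ) z) ^ k = 0 := by
  rw [ann_int a b ha j k, theta_int, if_neg h, mul_zero]

lemma ann_int_diag (a b : ℝ) (ha : 0 ≤ a) (hab : a ≤ b) (k : ℕ) :
    ∫ z in Ann a b, Complex.normSq z ^ k
      = Real.pi * ((b ^ (2 * k + 2) - a ^ (2 * k + 2)) / (k + 1)) := by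
  have h := ann_int a b ha k k
  rw [theta_int, if_pos rfl] at h
  have hptw : ∀ z : ℂ, z ^ k * ((starRingEnd ℂ) z) ^ k = ((Complex.normSq z ^ k : ℝ) : ℂ) := by
    intro z
    rw [← mul_pow, Complex.mul_conj]
    push_cast
    ring
  simp_rw [hptw] at h
  have h2 : ((∫ z in Ann a b, Complex.normSq z ^ k : ℝ) : ℂ)
      = ((∫ t in Set.Ioo a b, t ^ (k + k + 1) : ℝ) : ℂ) * ((2 * Real.pi : ℝ) : ℂ) := by
    rw [← h]
    congr 1
    exact integral_ofReal.symm
  rw [← Complex.ofReal_mul] at h2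
  have h3 : (∫ z in Ann a b, Complex.normSq z ^ k)
      = (∫ t in Set.Ioo a b, t ^ (k + k + 1)) * (2 * Real.pi) := by exact_mod_cast h2
  have h4 : (∫ t in Set.Ioo a b, t ^ (k + k + 1))
      = (b ^ (k + k + 1 + 1) - a ^ (k + k + 1 + 1)) / ((k + k + 1 : ℕ) + 1) := by
    rw [← integral_Ioc_eq_integral_Ioo, ← intervalIntegral.integral_of_le hab, integral_pow]
  rw [h3, h4]
  have hk : ((k:ℝ) + 1) ≠ 0 := by positivity
  have he : k + k + 1 + 1 = 2 * k + 2 := by ring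
  rw [he]
  push_cast
  field_simp
  ring

lemma integrableOn_of_sub_ball {E : Type*} [NormedAddCommGroup E] {f : ℂ → E} (hf : Continuous f) {s : Set ℂ}
    (hsub : s ⊆ Metric.ball (0:ℂ) 1) : IntegrableOn f s := by
  have h1 : IntegrableOn f (Metric.closedBall (0:ℂ) 1) :=
    (hf.continuousOn).integrableOn_compact (isCompact_closedBall _ _)
  exact h1.mono_set (hsub.trans Metric.ball_subset_closedBall)

lemma expand_bilinear (ν : Measure ℂ) (f : ℕ → ℂ → ℂ)
    (hInt : ∀ j l, Integrable (fun z => f j z * (starRingEnd ℂ) (f l z)) ν)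
    (c : ℕ → ℂ) (N : ℕ) :
    ∫ z, (∑ j ∈ Finset.range N, c j * f j z)
        * (starRingEnd ℂ) (∑ l ∈ Finset.range N, c l * f l z) ∂ν
      = ∑ j ∈ Finset.range N, ∑ l ∈ Finset.range N,
          c j * (starRingEnd ℂ) (c l) * ∫ z, f j z * (starRingEnd ℂ) (f l z) ∂ν := by
  have hptw : ∀ z, (∑ j ∈ Finset.range N, c j * f j z)
      * (starRingEnd ℂ) (∑ l ∈ Finset.range N, c l * f l z)
      = ∑ j ∈ Finset.range N, ∑ l ∈ Finset.range N,
          (c j * (starRingEnd ℂ) (c l)) * (f j z * (starRingEnd ℂ) (f l z)) := by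
    intro z
    rw [map_sum, Finset.sum_mul_sum]
    refine Finset.sum_congr rfl fun j _ => Finset.sum_congr rfl fun l _ => ?_
    rw [map_mul]
    ring
  simp_rw [hptw]
  rw [integral_finset_sum]
  · refine Finset.sum_congr rfl fun j _ => ?_
    rw [integral_finset_sum]
    · exact Finset.sum_congr rfl fun l _ => integral_const_mul _ _
    · exact fun l _ => (hInt j l).const_mul _
  · exact fun j _ => integrable_finset_sum _ (fun l _ => (hInt j l).const_mul _)

lemma span_lemma (p : ℕ → Polynomial ℂ) (hdeg : ∀ n, (p n).natDegree = n)
    (hlc : ∀ n, (p n).leadingCoeff ≠ 0) :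
    ∀ (n : ℕ) (q : Polynomial ℂ), q.natDegree ≤ n →
      ∃ c : ℕ → ℂ, q = ∑ k ∈ Finset.range (n+1), Polynomial.C (c k) * p k := by
  intro n
  induction n with
  | zero =>
    intro q hq
    refine ⟨fun _ => q.coeff 0 / (p 0).coeff 0, ?_⟩
    rw [Finset.sum_range_one]
    have hne : (p 0).coeff 0 ≠ 0 := by
      have := hlc 0; rwa [Polynomial.leadingCoeff, hdeg 0] at this
    have hp0 : p 0 = Polynomial.C ((p 0).coeff 0) :=
      Polynomial.eq_C_of_natDegree_le_zero (le_of_eq (hdeg 0))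
    conv_lhs => rw [Polynomial.eq_C_of_natDegree_le_zero hq]
    rw [hp0, ← Polynomial.C_mul, Polynomial.coeff_C_zero, div_mul_cancel₀ _ hne]
  | succ n ih =>
    intro q hq
    set d := q.coeff (n+1) / (p (n+1)).leadingCoeff with hd
    have hlcne := hlc (n+1)
    have hcoeff : (p (n+1)).coeff (n+1) = (p (n+1)).leadingCoeff := by
      rw [Polynomial.leadingCoeff, hdeg]
    have hq' : (q - Polynomial.C d * p (n+1)).natDegree ≤ n := by
      rw [Polynomial.natDegree_le_iff_coeff_eq_zero]
      intro N hN
      rw [Polynomial.coeff_sub, Polynomial.coeff_C_mul]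
      rcases Nat.lt_or_ge (n+1) N with h | h
      · rw [Polynomial.coeff_eq_zero_of_natDegree_lt (lt_of_le_of_lt hq h),
          Polynomial.coeff_eq_zero_of_natDegree_lt (by rw [hdeg]; exact h), mul_zero, sub_zero]
      · have hNe : N = n + 1 := le_antisymm h (Nat.succ_le_of_lt hN)
        subst hNe
        rw [hcoeff, hd, div_mul_cancel₀ _ hlcne, sub_self]
    obtain ⟨c', hc'⟩ := ih _ hq'
    refine ⟨Function.update c' (n+1) d, ?_⟩
    rw [Finset.sum_range_succ, Function.update_self]
    have hsum : ∑ k ∈ Finset.range (n+1), Polynomial.C (Function.update c' (n+1) d k) * p k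
        = ∑ k ∈ Finset.range (n+1), Polynomial.C (c' k) * p k := by
      refine Finset.sum_congr rfl fun k hk => ?_
      rw [Function.update_of_ne (Nat.ne_of_lt (Finset.mem_range.mp hk))]
    rw [hsum, ← hc']
    ring

lemma coeff_of_rep (p : ℕ → Polynomial ℂ) (hdeg : ∀ n, (p n).natDegree = n)
    (n : ℕ) (c : ℕ → ℂ) (q : Polynomial ℂ)
    (hrep : q = ∑ k ∈ Finset.range (n+1), Polynomial.C (c k) * p k) :
    q.coeff n = c n * (p n).coeff n := by
  rw [hrep, Polynomial.finset_sum_coeff, Finset.sum_range_succ]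
  have hz : ∑ k ∈ Finset.range n, (Polynomial.C (c k) * p k).coeff n = 0 :=
    Finset.sum_eq_zero fun k hk => by
      rw [Polynomial.coeff_C_mul,
        Polynomial.coeff_eq_zero_of_natDegree_lt (by rw [hdeg]; exact Finset.mem_range.mp hk),
        mul_zero]
  rw [hz, zero_add, Polynomial.coeff_C_mul]

lemma integral_mul_conj_eq (ν : Measure ℂ) (g : ℂ → ℂ) :
    ∫ z, g z * (starRingEnd ℂ) (g z) ∂ν
      = ((∫ z, Complex.normSq (g z) ∂ν : ℝ) : ℂ) := by
  have h : ∀ z, g z * (starRingEnd ℂ) (g z) = ((Complex.normSq (g z) : ℝ) : ℂ) :=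
    fun z => Complex.mul_conj _
  simp_rw [h]
  exact integral_ofReal

section Main

variable {K : Set ℂ} (hKc : IsCompact K) (hKD : K ⊆ Metric.ball (0 : ℂ) 1)
  {r : ℝ} (hr : IsGreatest ((fun z => ‖z‖) '' K) r)
  (p : ℕ → Polynomial ℂ)
  (hp : (∀ n, (p n).natDegree = n) ∧
    (∀ n, 0 < ((p n).leadingCoeff).re ∧ ((p n).leadingCoeff).im = 0) ∧
    (∀ m n, ∫ z in Metric.ball (0:ℂ) 1 \ K, (p m).eval z * (starRingEnd ℂ) ((p n).eval z)
        = if m = n then 1 else 0))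

-- basic facts
lemma hr0' (hKne : K.Nonempty) (hr : IsGreatest ((fun z => ‖z‖) '' K) r) : 0 ≤ r := by
  obtain ⟨z, hz⟩ := hKne
  exact le_trans (norm_nonneg z) (hr.2 ⟨z, hz, rfl⟩)

lemma hrlt1' (hKD : K ⊆ Metric.ball (0 : ℂ) 1)
    (hr : IsGreatest ((fun z => ‖z‖) '' K) r) : r < 1 := by
  obtain ⟨z, hz, hzr⟩ := hr.1
  rw [← hzr]
  have := hKD hz
  rwa [Metric.mem_ball, dist_zero_right] at this

lemma annr1_subset (hr : IsGreatest ((fun z => ‖z‖) '' K) r) :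
    Ann r 1 ⊆ Metric.ball (0:ℂ) 1 \ K := by
  rintro z ⟨h1, h2⟩
  refine ⟨by rwa [Metric.mem_ball, dist_zero_right], fun hz => ?_⟩
  exact absurd (hr.2 ⟨z, hz, rfl⟩) (not_le.mpr h1)

lemma ann01_aeeq : (Ann 0 1 : Set ℂ) =ᵐ[volume] Metric.ball (0:ℂ) 1 := by
  rw [ae_eq_set]
  constructor
  · rw [Set.diff_eq_empty.mpr, measure_empty]
    rintro z ⟨h1, h2⟩
    rwa [Metric.mem_ball, dist_zero_right]
  · have hsub : Metric.ball (0:ℂ) 1 \ Ann 0 1 ⊆ {0} := by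
      rintro z ⟨hz, hz2⟩
      rw [Metric.mem_ball, dist_zero_right] at hz
      simp only [Ann, Set.mem_setOf_eq, not_and] at hz2
      have : ¬ 0 < ‖z‖ := fun hc => hz2 hc hz
      have h0 : ‖z‖ = 0 := le_antisymm (not_lt.mp this) (norm_nonneg z)
      simpa using norm_eq_zero.mp h0
    exact measure_mono_null hsub (measure_singleton 0)

end Main

lemma rep_integral {K : Set ℂ} (hKc : IsCompact K)
    (p : ℕ → Polynomial ℂ)
    (horth : ∀ m n, ∫ z in Metric.ball (0:ℂ) 1 \ K,
      (p m).eval z * (starRingEnd ℂ) ((p n).eval z) = if m = n then 1 else 0)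
    (n : ℕ) (c : ℕ → ℂ) (q : Polynomial ℂ)
    (hrep : q = ∑ k ∈ Finset.range (n+1), Polynomial.C (c k) * p k) :
    ∫ z in Metric.ball (0:ℂ) 1 \ K, Complex.normSq (q.eval z)
      = ∑ k ∈ Finset.range (n+1), Complex.normSq (c k) := by
  set S := Metric.ball (0:ℂ) 1 \ K with hS
  have hSsub : S ⊆ Metric.ball (0:ℂ) 1 := Set.diff_subset
  have hev : ∀ z, q.eval z = ∑ k ∈ Finset.range (n+1), c k * (p k).eval z := by
    intro z
    rw [hrep, Polynomial.eval_finset_sum]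
    exact Finset.sum_congr rfl fun k _ => by rw [Polynomial.eval_mul, Polynomial.eval_C]
  have hInt : ∀ j l, Integrable (fun z => (p j).eval z * (starRingEnd ℂ) ((p l).eval z))
      (volume.restrict S) := by
    intro j l
    exact integrableOn_of_sub_ball
      (((p j).continuous).mul (Complex.continuous_conj.comp ((p l).continuous))) hSsub
  have hmain : ∫ z in S, q.eval z * (starRingEnd ℂ) (q.eval z)
      = ∑ j ∈ Finset.range (n+1), ∑ l ∈ Finset.range (n+1),
          c j * (starRingEnd ℂ) (c l)
            * ∫ z in S, (p j).eval z * (starRingEnd ℂ) ((p l).eval z) := by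
    simp_rw [hev]
    exact expand_bilinear (volume.restrict S) (fun k z => (p k).eval z) hInt c (n+1)
  rw [integral_mul_conj_eq] at hmain
  have hinner : ∀ j ∈ Finset.range (n+1),
      ∑ l ∈ Finset.range (n+1), c j * (starRingEnd ℂ) (c l)
          * ∫ z in S, (p j).eval z * (starRingEnd ℂ) ((p l).eval z)
        = ((Complex.normSq (c j) : ℝ) : ℂ) := by
    intro j hj
    rw [Finset.sum_eq_single j]
    · rw [horth j j, if_pos rfl, mul_one, Complex.mul_conj]
    · intro l _ hl
      rw [horth j l, if_neg (fun h => hl h.symm), mul_zero]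
    · intro h; exact absurd hj h
  rw [Finset.sum_congr rfl hinner, ← Complex.ofReal_sum] at hmain
  exact_mod_cast hmain

lemma mono_integral {r : ℝ} (hr0 : 0 ≤ r) (hr1 : r ≤ 1)
    (n : ℕ) (q : Polynomial ℂ) (hq : q.natDegree = n) :
    ∫ z in Ann r 1, Complex.normSq (q.eval z)
      = ∑ j ∈ Finset.range (n+1), Complex.normSq (q.coeff j)
          * (Real.pi * ((1 - r ^ (2*j+2)) / (j+1))) := by
  have hAsub : Ann r 1 ⊆ Metric.ball (0:ℂ) 1 := by
    rintro z ⟨h1, h2⟩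
    rwa [Metric.mem_ball, dist_zero_right]
  have hev : ∀ z : ℂ, q.eval z = ∑ i ∈ Finset.range (n+1), q.coeff i * z ^ i := by
    intro z
    conv_lhs => rw [Polynomial.eval_eq_sum_range, hq]
  have hInt : ∀ j l, Integrable (fun z : ℂ => z ^ j * (starRingEnd ℂ) (z ^ l))
      (volume.restrict (Ann r 1)) := by
    intro j l
    exact integrableOn_of_sub_ball
      ((continuous_pow j).mul (Complex.continuous_conj.comp (continuous_pow l))) hAsub
  have hmain : ∫ z in Ann r 1, q.eval z * (starRingEnd ℂ) (q.eval z)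
      = ∑ j ∈ Finset.range (n+1), ∑ l ∈ Finset.range (n+1),
          q.coeff j * (starRingEnd ℂ) (q.coeff l)
            * ∫ z in Ann r 1, z ^ j * (starRingEnd ℂ) (z ^ l) := by
    simp_rw [hev]
    exact expand_bilinear (volume.restrict (Ann r 1)) (fun k z => z ^ k) hInt q.coeff (n+1)
  rw [integral_mul_conj_eq] at hmain
  have hdiag : ∀ j : ℕ, ∫ z in Ann r 1, z ^ j * (starRingEnd ℂ) (z ^ j)
      = ((Real.pi * ((1 - r ^ (2*j+2)) / (j+1)) : ℝ) : ℂ) := by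
    intro j
    have hptw : ∀ z : ℂ, z ^ j * (starRingEnd ℂ) (z ^ j)
        = ((Complex.normSq z ^ j : ℝ) : ℂ) := by
      intro z
      rw [map_pow, ← mul_pow, Complex.mul_conj]
      push_cast; ring
    simp_rw [hptw]
    have hOR : (∫ z in Ann r 1, ((Complex.normSq z ^ j : ℝ) : ℂ))
        = ((∫ z in Ann r 1, Complex.normSq z ^ j : ℝ) : ℂ) := integral_ofReal
    rw [hOR, ann_int_diag r 1 hr0 hr1 j, one_pow]
  have hinner : ∀ j ∈ Finset.range (n+1),
      ∑ l ∈ Finset.range (n+1), q.coeff j * (starRingEnd ℂ) (q.coeff l)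
          * ∫ z in Ann r 1, z ^ j * (starRingEnd ℂ) (z ^ l)
        = ((Complex.normSq (q.coeff j) * (Real.pi * ((1 - r ^ (2*j+2)) / (j+1))) : ℝ) : ℂ) := by
    intro j hj
    rw [Finset.sum_eq_single j]
    · rw [hdiag j, Complex.mul_conj, ← Complex.ofReal_mul]
    · intro l _ hl
      have : ∀ z : ℂ, z ^ j * (starRingEnd ℂ) (z ^ l) = z ^ j * ((starRingEnd ℂ) z) ^ l := by
        intro z; rw [map_pow]
      simp_rw [this]
      rw [ann_int_orth r 1 hr0 (fun h => hl h.symm), mul_zero]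
    · intro h; exact absurd hj h
  rw [Finset.sum_congr rfl hinner, ← Complex.ofReal_sum] at hmain
  exact_mod_cast hmain

lemma per_n {K : Set ℂ} (hKc : IsCompact K) (hKne : K.Nonempty)
    (hKD : K ⊆ Metric.ball (0 : ℂ) 1)
    {r : ℝ} (hr : IsGreatest ((fun z => ‖z‖) '' K) r)
    (p : ℕ → Polynomial ℂ)
    (hdeg : ∀ n, (p n).natDegree = n)
    (hpos : ∀ n, 0 < ((p n).leadingCoeff).re ∧ ((p n).leadingCoeff).im = 0)
    (horth : ∀ m n, ∫ z in Metric.ball (0:ℂ) 1 \ K,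
      (p m).eval z * (starRingEnd ℂ) ((p n).eval z) = if m = n then 1 else 0)
    (n : ℕ) :
    1 ≤ ((p n).leadingCoeff).re / Real.sqrt (((n : ℝ) + 1) / Real.pi) ∧
    ((p n).leadingCoeff).re / Real.sqrt (((n : ℝ) + 1) / Real.pi)
      ≤ (Real.sqrt (1 - r ^ (2 * n + 2)))⁻¹ := by
  have hr0 : 0 ≤ r := hr0' hKne hr
  have hrlt1 : r < 1 := hrlt1' hKD hr
  set S := Metric.ball (0:ℂ) 1 \ K with hS
  have hSsub : S ⊆ Metric.ball (0:ℂ) 1 := Set.diff_subset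
  set γ : ℝ := ((p n).leadingCoeff).re with hγ
  have hγpos : 0 < γ := (hpos n).1
  set L : ℂ := (p n).leadingCoeff with hLdef
  have hLre : L = ((γ : ℝ) : ℂ) := by
    apply Complex.ext
    · simp [hγ]
    · rw [(hpos n).2]; simp
  have hLne : L ≠ 0 := by
    rw [hLre]
    exact_mod_cast ne_of_gt hγpos
  have hNSL : Complex.normSq L = γ ^ 2 := by
    rw [hLre, Complex.normSq_ofReal]; ring
  have hlcne : ∀ m, (p m).leadingCoeff ≠ 0 := by
    intro m h
    have := (hpos m).1
    rw [h] at this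
    simp at this
  have hcoeffn : (p n).coeff n = L := by
    rw [hLdef, Polynomial.leadingCoeff, hdeg]
  have hπ := Real.pi_pos
  have hn1 : (0:ℝ) < (n:ℝ) + 1 := by positivity
  -- Lower bound on γ
  have hlow : 1 ≤ Real.pi / ((n:ℝ)+1) * γ ^ 2 := by
    obtain ⟨c, hrep⟩ := span_lemma p hdeg hlcne n (Polynomial.X ^ n)
      (le_of_eq (Polynomial.natDegree_X_pow n))
    have hcn : c n * L = 1 := by
      have := coeff_of_rep p hdeg n c _ hrep
      rw [Polynomial.coeff_X_pow, if_pos rfl, hcoeffn] at this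
      exact this.symm
    have hns : Complex.normSq (c n) * (γ ^ 2) = 1 := by
      rw [← hNSL, ← Complex.normSq_mul, hcn, Complex.normSq_one]
    have h1 : Complex.normSq (c n) ≤ ∫ z in S, Complex.normSq ((Polynomial.X ^ n).eval z) := by
      rw [rep_integral hKc p horth n c _ hrep]
      exact Finset.single_le_sum (fun k _ => Complex.normSq_nonneg (c k))
        (Finset.self_mem_range_succ n)
    have h2 : ∫ z in S, Complex.normSq ((Polynomial.X ^ n).eval z)
        ≤ Real.pi / ((n:ℝ)+1) := by
      have hptw : ∀ z : ℂ, Complex.normSq ((Polynomial.X ^ n).eval z)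
          = Complex.normSq z ^ n := by
        intro z
        rw [Polynomial.eval_pow, Polynomial.eval_X, map_pow]
      simp_rw [hptw]
      have hint : IntegrableOn (fun z : ℂ => Complex.normSq z ^ n) (Metric.ball (0:ℂ) 1) :=
        integrableOn_of_sub_ball ((Complex.continuous_normSq).pow n) (subset_refl _)
      have hmono : ∫ z in S, Complex.normSq z ^ n
          ≤ ∫ z in Metric.ball (0:ℂ) 1, Complex.normSq z ^ n := by
        apply setIntegral_mono_set hint
        · exact Filter.Eventually.of_forall (fun z => pow_nonneg (Complex.normSq_nonneg z) n)
        · exact (hSsub).eventuallyLE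
      have hval : ∫ z in Metric.ball (0:ℂ) 1, Complex.normSq z ^ n
          = Real.pi / ((n:ℝ)+1) := by
        rw [← setIntegral_congr_set ann01_aeeq, ann_int_diag 0 1 le_rfl zero_le_one n,
          one_pow, zero_pow (by omega : 2*n+2 ≠ 0)]
        ring
      linarith
    have h3 : Complex.normSq (c n) ≤ Real.pi / ((n:ℝ)+1) := le_trans h1 h2
    calc (1:ℝ) = Complex.normSq (c n) * γ ^ 2 := hns.symm
    _ ≤ Real.pi / ((n:ℝ)+1) * γ ^ 2 := by
        apply mul_le_mul_of_nonneg_right h3 (by positivity)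
  -- Upper bound on γ
  have hupp : Real.pi * ((1 - r ^ (2*n+2)) / ((n:ℝ)+1)) * γ ^ 2 ≤ 1 := by
    set q : Polynomial ℂ := Polynomial.C L⁻¹ * p n with hqdef
    have hqdeg : q.natDegree = n := by
      rw [hqdef, Polynomial.natDegree_C_mul (inv_ne_zero hLne), hdeg]
    have hrep : q = ∑ k ∈ Finset.range (n+1),
        Polynomial.C ((fun k => if k = n then L⁻¹ else 0) k) * p k := by
      rw [Finset.sum_range_succ]
      have h0 : ∑ k ∈ Finset.range n, Polynomial.C ((fun k => if k = n then L⁻¹ else 0) k) * p k = 0 :=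
        Finset.sum_eq_zero fun k hk => by simp [Nat.ne_of_lt (Finset.mem_range.mp hk)]
      rw [h0, zero_add]
      simp [hqdef]
    have hIq : ∫ z in S, Complex.normSq (q.eval z) = (γ ^ 2)⁻¹ := by
      rw [rep_integral hKc p horth n _ _ hrep, Finset.sum_range_succ]
      have h0 : ∑ k ∈ Finset.range n, Complex.normSq ((fun k => if k = n then L⁻¹ else 0) k) = 0 :=
        Finset.sum_eq_zero fun k hk => by simp [Nat.ne_of_lt (Finset.mem_range.mp hk)]
      rw [h0, zero_add]
      simp [Complex.normSq_inv, hNSL]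
    have hqcn : q.coeff n = 1 := by
      rw [hqdef, Polynomial.coeff_C_mul, hcoeffn, inv_mul_cancel₀ hLne]
    have h4 : Real.pi * ((1 - r ^ (2*n+2)) / ((n:ℝ)+1))
        ≤ ∫ z in Ann r 1, Complex.normSq (q.eval z) := by
      rw [mono_integral hr0 (le_of_lt hrlt1) n q hqdeg]
      have := Finset.single_le_sum (s := Finset.range (n+1))
        (f := fun j => Complex.normSq (q.coeff j) * (Real.pi * ((1 - r ^ (2*j+2)) / ((j:ℝ)+1))))
        (fun j _ => by
          apply mul_nonneg (Complex.normSq_nonneg _)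
          apply mul_nonneg (le_of_lt hπ)
          apply div_nonneg _ (by positivity)
          have : r ^ (2*j+2) ≤ 1 := pow_le_one₀ hr0 (le_of_lt hrlt1)
          linarith)
        (Finset.self_mem_range_succ n)
      simpa [hqcn] using this
    have h5 : ∫ z in Ann r 1, Complex.normSq (q.eval z)
        ≤ ∫ z in S, Complex.normSq (q.eval z) := by
      apply setIntegral_mono_set
      · exact integrableOn_of_sub_ball
          ((Complex.continuous_normSq).comp q.continuous) hSsub
      · exact Filter.Eventually.of_forall (fun z => Complex.normSq_nonneg _)
      · exact (annr1_subset hr).eventuallyLE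
    have h6 : Real.pi * ((1 - r ^ (2*n+2)) / ((n:ℝ)+1)) ≤ (γ ^ 2)⁻¹ := by
      rw [← hIq]; linarith
    calc Real.pi * ((1 - r ^ (2*n+2)) / ((n:ℝ)+1)) * γ ^ 2
        ≤ (γ ^ 2)⁻¹ * γ ^ 2 := mul_le_mul_of_nonneg_right h6 (by positivity)
    _ = 1 := by field_simp
  -- conclude
  have ht : 0 < Real.sqrt (((n:ℝ)+1) / Real.pi) := Real.sqrt_pos.mpr (by positivity)
  constructor
  · rw [le_div_iff₀ ht, one_mul]
    have hγ2 : ((n:ℝ)+1) / Real.pi ≤ γ ^ 2 := by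
      rw [div_le_iff₀ hπ]
      rw [div_mul_eq_mul_div, le_div_iff₀ hn1, one_mul] at hlow
      linarith
    calc Real.sqrt (((n:ℝ)+1) / Real.pi) ≤ Real.sqrt (γ ^ 2) := Real.sqrt_le_sqrt hγ2
    _ = γ := Real.sqrt_sq (le_of_lt hγpos)
  · set x : ℝ := r ^ (2*n+2) with hx
    have hx0 : 0 ≤ x := by positivity
    have hx1 : x < 1 := pow_lt_one₀ hr0 hrlt1 (by omega)
    have h1x : 0 < 1 - x := by linarith
    have hγ2 : γ ^ 2 ≤ (((n:ℝ)+1) / Real.pi) * (1 - x)⁻¹ := by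
      have hw : 0 < Real.pi * ((1 - x) / ((n:ℝ)+1)) := by positivity
      rw [← le_div_iff₀' hw] at hupp
      calc γ ^ 2 ≤ 1 / (Real.pi * ((1 - x) / ((n:ℝ)+1))) := hupp
      _ = (((n:ℝ)+1) / Real.pi) * (1 - x)⁻¹ := by field_simp
    have hsq : γ ≤ Real.sqrt (((n:ℝ)+1) / Real.pi) * (Real.sqrt (1 - x))⁻¹ := by
      calc γ = Real.sqrt (γ ^ 2) := (Real.sqrt_sq (le_of_lt hγpos)).symm
      _ ≤ Real.sqrt ((((n:ℝ)+1) / Real.pi) * (1 - x)⁻¹) := Real.sqrt_le_sqrt hγ2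
      _ = Real.sqrt (((n:ℝ)+1) / Real.pi) * Real.sqrt ((1 - x)⁻¹) :=
          Real.sqrt_mul (by positivity) _
      _ = Real.sqrt (((n:ℝ)+1) / Real.pi) * (Real.sqrt (1 - x))⁻¹ := by
          rw [Real.sqrt_inv]
    rw [div_le_iff₀ ht]
    calc γ ≤ Real.sqrt (((n:ℝ)+1) / Real.pi) * (Real.sqrt (1 - x))⁻¹ := hsq
    _ = (Real.sqrt (1 - x))⁻¹ * Real.sqrt (((n:ℝ)+1) / Real.pi) := by ring


/-- For `μ₁ = A|_{𝔻∖K}` and `μ₀ = A|_𝔻` with `r = max{|z| : z ∈ K}`: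
`1 ≤ γ_n(μ₁)/γ_n(μ₀) ≤ (1 − r^{2n+2})^{−1/2}`, where `γ_n(μ₀) = √((n+1)/π)`;
in particular `γ_n(μ₁)/√((n+1)/π) = 1 + O(r^{2n})`. -/
theorem stmt_18 (K : Set ℂ) (hKc : IsCompact K) (hKne : K.Nonempty)
    (hKD : K ⊆ Metric.ball (0 : ℂ) 1)
    (r : ℝ) (hr : IsGreatest ((fun z => ‖z‖) '' K) r)
    (μ0 μ1 : Measure ℂ)
    (hμ0 : μ0 = volume.restrict (Metric.ball (0 : ℂ) 1))
    (hμ1 : μ1 = volume.restrict (Metric.ball (0 : ℂ) 1 \ K))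
    (p : ℕ → Polynomial ℂ) (hp : ONP μ1 p) :
    (∀ n : ℕ,
      1 ≤ ((p n).leadingCoeff).re / Real.sqrt (((n : ℝ) + 1) / Real.pi) ∧
      ((p n).leadingCoeff).re / Real.sqrt (((n : ℝ) + 1) / Real.pi)
        ≤ (Real.sqrt (1 - r ^ (2 * n + 2)))⁻¹) ∧
    ∃ C : ℝ, 0 < C ∧ ∀ n : ℕ,
      |((p n).leadingCoeff).re / Real.sqrt (((n : ℝ) + 1) / Real.pi) - 1|
        ≤ C * r ^ (2 * n) := by
  subst hμ1
  obtain ⟨hdeg, hpos, horth⟩ := hp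
  have hmain := per_n hKc hKne hKD hr p hdeg hpos horth
  refine ⟨hmain, ?_⟩
  have hr0 : 0 ≤ r := hr0' hKne hr
  have hrlt1 : r < 1 := hrlt1' hKD hr
  have h1r2 : 0 < 1 - r ^ 2 := by nlinarith
  set t : ℝ := Real.sqrt (1 - r ^ 2) with htdef
  have ht : 0 < t := Real.sqrt_pos.mpr h1r2
  refine ⟨1 + r ^ 2 / t, by positivity, ?_⟩
  intro n
  obtain ⟨hA, hB⟩ := hmain n
  rw [abs_of_nonneg (by linarith)]
  set x : ℝ := r ^ (2 * n + 2) with hxdef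
  have hxeq : x = r ^ (2 * n) * r ^ 2 := by rw [hxdef, pow_add]
  have hx0 : 0 ≤ x := by positivity
  have hxr2 : x ≤ r ^ 2 := by
    rw [hxeq]
    calc r ^ (2*n) * r ^ 2 ≤ 1 * r ^ 2 := by
          apply mul_le_mul_of_nonneg_right (pow_le_one₀ hr0 (le_of_lt hrlt1)) (by positivity)
    _ = r ^ 2 := one_mul _
  have hx1 : x < 1 := lt_of_le_of_lt hxr2 (by nlinarith)
  set s : ℝ := Real.sqrt (1 - x) with hsdef
  have hs : 0 < s := Real.sqrt_pos.mpr (by linarith)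
  have hs1 : s ≤ 1 := Real.sqrt_le_one.mpr (by linarith)
  have hssq : s ^ 2 = 1 - x := Real.sq_sqrt (by linarith)
  have hts : t ≤ s := Real.sqrt_le_sqrt (by nlinarith)
  have hkey : s⁻¹ - 1 ≤ x / t := by
    have hgoal : s⁻¹ ≤ 1 + x / t := by
      rw [← one_div, div_le_iff₀ hs]
      have h1 : 1 - x ≤ s := by nlinarith
      have h2 : x ≤ x / t * s := by
        rw [div_mul_eq_mul_div, le_div_iff₀ ht]
        nlinarith
      nlinarith
    linarith
  calc ((p n).leadingCoeff).re / Real.sqrt (((n : ℝ) + 1) / Real.pi) - 1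
      ≤ s⁻¹ - 1 := by linarith
  _ ≤ x / t := hkey
  _ = (r ^ 2 / t) * r ^ (2 * n) := by rw [hxeq]; ring
  _ ≤ (1 + r ^ 2 / t) * r ^ (2 * n) := by
      apply mul_le_mul_of_nonneg_right (by linarith) (by positivity)
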